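/- If f : [0,1] → ℝ is continuously differentiable, then for every n > 1 and x ∈ [0,1], |R_n(f;x) − f(x)| ≤ ((4 + 6√3)/27) n^{−1/2} ω₁(n^{−1/2}), where ω₁ is the modulus of continuity of f′. -/

import Mathlib

/-- Generalized rising factorial with increment `h`: `x^(m,h) = x(x+h)···(x+(m-1)h)`. -/
noncomputable def rfac (x h : ℝ) (m : ℕ) : ℝ := ∏ i ∈ Finset.range m, (x + i * h)

/-- Pólya urn probability `p_{n,k}^{a,b,c}`. -/
noncomputable def polyaProb (a b c : ℝ) (n k : ℕ) : ℝ :=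
  (n.choose k : ℝ) * rfac a c k * rfac b c (n - k) / rfac (a + b) c n

/-- The operator `R_n(f;x)` with `c = -min{x,1-x}/(n-1)`. -/
noncomputable def Rop (n : ℕ) (f : ℝ → ℝ) (x : ℝ) : ℝ :=
  ∑ k ∈ Finset.range (n + 1),
    polyaProb x (1 - x) (-(min x (1 - x)) / ((n : ℝ) - 1)) n k * f ((k : ℝ) / n)

/-- Modulus of continuity of `f` on `[a,b]`. -/
noncomputable def modulus (f : ℝ → ℝ) (a b δ : ℝ) : ℝ :=
  sSup {d : ℝ | ∃ u ∈ Set.Icc a b, ∃ v ∈ Set.Icc a b, |u - v| ≤ δ ∧ d = |f u - f v|}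

set_option maxHeartbeats 1000000

lemma rfac_zero (x h : ℝ) : rfac x h 0 = 1 := by simp [rfac]

lemma rfac_succ (x h : ℝ) (m : ℕ) : rfac x h (m+1) = rfac x h m * (x + m*h) := by
  simp [rfac, Finset.prod_range_succ]

lemma rfac_succ' (x h : ℝ) (m : ℕ) : rfac x h (m+1) = x * rfac (x+h) h m := by
  rw [rfac, Finset.prod_range_succ']
  rw [show x + (0:ℕ)*h = x by push_cast; ring, mul_comm]
  congr 1
  apply Finset.prod_congr rfl
  intro i _
  push_cast
  ring

lemma vandermonde (c a b : ℝ) (n : ℕ) :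
    ∑ k ∈ Finset.range (n+1), (n.choose k : ℝ) * rfac a c k * rfac b c (n-k)
      = rfac (a+b) c n := by
  induction n with
  | zero => simp [rfac]
  | succ n ih =>
    have hL : ∑ k ∈ Finset.range (n+2), ((n+1).choose k : ℝ) * rfac a c k * rfac b c (n+1-k)
        = (∑ j ∈ Finset.range (n+1),
            ((n.choose j : ℝ) + (n.choose (j+1) : ℝ)) * rfac a c (j+1) * rfac b c (n-j))
          + rfac b c (n+1) := by
      rw [Finset.sum_range_succ']
      congr 1
      · apply Finset.sum_congr rfl
        intro j hj
        rw [show n+1-(j+1) = n-j from by omega, Nat.choose_succ_succ]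
        push_cast
        ring
      · simp [rfac_zero]
    have hT : (∑ k ∈ Finset.range (n+2), (n.choose k : ℝ) * rfac a c k * rfac b c (n+1-k))
        = (∑ j ∈ Finset.range (n+1), (n.choose (j+1) : ℝ) * rfac a c (j+1) * rfac b c (n-j))
          + rfac b c (n+1) := by
      rw [Finset.sum_range_succ']
      congr 1
      · apply Finset.sum_congr rfl
        intro j hj
        rw [show n+1-(j+1) = n-j from by omega]
      · simp [rfac_zero]
    have hT2 : (∑ k ∈ Finset.range (n+2), (n.choose k : ℝ) * rfac a c k * rfac b c (n+1-k))
        = ∑ k ∈ Finset.range (n+1),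
            (n.choose k : ℝ) * rfac a c k * (rfac b c (n-k) * (b + ((n-k : ℕ) : ℝ)*c)) := by
      rw [Finset.sum_range_succ]
      simp only [Nat.choose_succ_self, Nat.cast_zero, zero_mul]
      rw [add_zero]
      apply Finset.sum_congr rfl
      intro k hk
      have hk' : k ≤ n := by simpa [Nat.lt_succ_iff] using hk
      rw [show n+1-k = (n-k)+1 from by omega, rfac_succ]
    have hS2 : ∀ j ∈ Finset.range (n+1),
        (n.choose j : ℝ) * rfac a c (j+1) * rfac b c (n-j)
        = (n.choose j : ℝ) * (rfac a c j * (a + (j:ℝ)*c)) * rfac b c (n-j) := by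
      intro j _
      rw [rfac_succ]
    have combine : ∑ k ∈ Finset.range (n+2), ((n+1).choose k : ℝ) * rfac a c k * rfac b c (n+1-k)
        = ∑ k ∈ Finset.range (n+1),
            ((n.choose k : ℝ) * rfac a c k * (rfac b c (n-k) * (b + ((n-k : ℕ) : ℝ)*c))
             + (n.choose k : ℝ) * (rfac a c k * (a + (k:ℝ)*c)) * rfac b c (n-k)) := by
      rw [Finset.sum_add_distrib, ← hT2, hT, ← Finset.sum_congr rfl hS2]
      have expand : ∀ j ∈ Finset.range (n+1),
          ((n.choose j : ℝ) + (n.choose (j+1) : ℝ)) * rfac a c (j+1) * rfac b c (n-j)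
          = (n.choose (j+1) : ℝ) * rfac a c (j+1) * rfac b c (n-j)
            + (n.choose j : ℝ) * rfac a c (j+1) * rfac b c (n-j) := by
        intro j _; ring
      rw [hL, Finset.sum_congr rfl expand, Finset.sum_add_distrib]
      ring
    rw [combine]
    have final : ∀ k ∈ Finset.range (n+1),
        (n.choose k : ℝ) * rfac a c k * (rfac b c (n-k) * (b + ((n-k : ℕ) : ℝ)*c))
          + (n.choose k : ℝ) * (rfac a c k * (a + (k:ℝ)*c)) * rfac b c (n-k)
        = ((n.choose k : ℝ) * rfac a c k * rfac b c (n-k)) * (a + b + (n:ℝ)*c) := by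
      intro k hk
      have hk' : k ≤ n := by simpa [Nat.lt_succ_iff] using hk
      rw [Nat.cast_sub hk']
      ring
    rw [Finset.sum_congr rfl final, ← Finset.sum_mul, ih, rfac_succ]

lemma shift (c a : ℝ) (w g : ℕ → ℝ) (n : ℕ) :
    ∑ k ∈ Finset.range (n+2), (k : ℝ) * w k * ((n+1).choose k : ℝ) * rfac a c k * g (n+1-k)
    = ((n:ℝ)+1) * a * ∑ j ∈ Finset.range (n+1), w (j+1) * (n.choose j : ℝ) * rfac (a+c) c j * g (n-j) := by
  rw [Finset.sum_range_succ']
  simp only [Nat.cast_zero, zero_mul]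
  rw [add_zero, Finset.mul_sum]
  apply Finset.sum_congr rfl
  intro j hj
  rw [show n+1-(j+1) = n-j from by omega, rfac_succ']
  have h2 : ((n+1).choose (j+1) : ℝ) * ((j:ℝ)+1) = ((n:ℝ)+1) * (n.choose j : ℝ) := by
    exact_mod_cast (Nat.add_one_mul_choose_eq n j).symm
  push_cast
  linear_combination (w (j+1) * a * rfac (a+c) c j * g (n-j)) * h2

lemma moment1 (c a b : ℝ) (n : ℕ) :
    ∑ k ∈ Finset.range (n+2), (k:ℝ) * ((n+1).choose k : ℝ) * rfac a c k * rfac b c (n+1-k)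
    = ((n:ℝ)+1) * a * rfac (a+b+c) c n := by
  have h := shift c a (fun _ => (1:ℝ)) (fun j => rfac b c j) n
  simp only [mul_one, one_mul] at h
  rw [h, vandermonde c (a+c) b n, show a+c+b = a+b+c from by ring]

lemma moment2 (c a b : ℝ) (n : ℕ) :
    ∑ k ∈ Finset.range (n+3), (k:ℝ) * ((k:ℝ) - 1) * ((n+2).choose k : ℝ) * rfac a c k * rfac b c (n+2-k)
    = ((n:ℝ)+2) * ((n:ℝ)+1) * a * (a+c) * rfac (a+b+2*c) c n := by
  have h := shift c a (fun k => (k:ℝ) - 1) (fun j => rfac b c j) (n+1)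
  push_cast at h
  rw [show ∑ k ∈ Finset.range (n+3), (k:ℝ) * ((k:ℝ) - 1) * ((n+2).choose k : ℝ) * rfac a c k * rfac b c (n+2-k)
      = ∑ k ∈ Finset.range (n+1+2), (k:ℝ) * ((k:ℝ)-1) * ((n+1+1).choose k : ℝ) * rfac a c k * rfac b c (n+1+1-k) from by
    norm_num]
  rw [h]
  have h1 := moment1 c (a+c) b n
  rw [show ∑ j ∈ Finset.range (n+1+1), ((j:ℝ) + 1 - 1) * ((n+1).choose j : ℝ) * rfac (a+c) c j * rfac b c (n+1-j)
      = ∑ j ∈ Finset.range (n+2), (j:ℝ) * ((n+1).choose j : ℝ) * rfac (a+c) c j * rfac b c (n+1-j) from by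
    apply Finset.sum_congr rfl; intros; ring_nf]
  rw [h1, show a+c+b+c = a+b+2*c from by ring]
  ring

lemma modulus_bddAbove (g : ℝ → ℝ) (hg : ContinuousOn g (Set.Icc (0:ℝ) 1)) (δ : ℝ) :
    BddAbove {d : ℝ | ∃ u ∈ Set.Icc (0:ℝ) 1, ∃ v ∈ Set.Icc (0:ℝ) 1, |u - v| ≤ δ ∧ d = |g u - g v|} := by
  obtain ⟨C, hC⟩ := (isCompact_Icc : IsCompact (Set.Icc (0:ℝ) 1)).exists_bound_of_continuousOn hg
  refine ⟨2*C, ?_⟩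
  rintro d ⟨u, hu, v, hv, -, rfl⟩
  have h1 := hC u hu
  have h2 := hC v hv
  simp only [Real.norm_eq_abs] at h1 h2
  calc |g u - g v| ≤ |g u| + |g v| := abs_sub _ _
    _ ≤ 2*C := by linarith

lemma le_modulus (g : ℝ → ℝ) (hg : ContinuousOn g (Set.Icc (0:ℝ) 1)) {δ u v : ℝ}
    (hu : u ∈ Set.Icc (0:ℝ) 1) (hv : v ∈ Set.Icc (0:ℝ) 1) (h : |u - v| ≤ δ) :
    |g u - g v| ≤ modulus g 0 1 δ :=
  le_csSup (modulus_bddAbove g hg δ) ⟨u, hu, v, hv, h, rfl⟩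

lemma modulus_nonneg (g : ℝ → ℝ) (hg : ContinuousOn g (Set.Icc (0:ℝ) 1)) {δ : ℝ} (hδ : 0 ≤ δ) :
    0 ≤ modulus g 0 1 δ := by
  have := le_modulus g hg (u := 0) (v := 0) (by norm_num) (by norm_num) (by simpa)
  simpa using this

lemma modulus_chain (g : ℝ → ℝ) (hg : ContinuousOn g (Set.Icc (0:ℝ) 1)) {δ u v : ℝ}
    (hδ : 0 < δ) (hu : u ∈ Set.Icc (0:ℝ) 1) (hv : v ∈ Set.Icc (0:ℝ) 1) :
    |g u - g v| ≤ (1 + |u - v|/δ) * modulus g 0 1 δ := by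
  set ω := modulus g 0 1 δ with hω
  have hω0 : 0 ≤ ω := modulus_nonneg g hg hδ.le
  set M := ⌈|u - v|/δ⌉₊ with hM
  rcases Nat.eq_zero_or_pos M with hM0 | hMpos
  · -- then |u-v| ≤ 0 so u = v
    have : |u - v|/δ ≤ 0 := by
      by_contra hcon
      push_neg at hcon
      have := Nat.ceil_pos.mpr hcon
      omega
    have huv : u = v := by
      have h1 : 0 ≤ |u - v|/δ := div_nonneg (abs_nonneg _) hδ.le
      have h2 : |u - v|/δ = 0 := le_antisymm this h1
      have h3 : |u - v| = 0 := by
        field_simp at h2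
        simpa [abs_eq_zero] using h2
      rwa [abs_eq_zero, sub_eq_zero] at h3
    rw [huv]
    simp only [sub_self, abs_zero]
    positivity
  · set w : ℕ → ℝ := fun i => v + (i/M) * (u - v) with hw
    have hMR : (0:ℝ) < M := by exact_mod_cast hMpos
    have hwmem : ∀ i ≤ M, w i ∈ Set.Icc (0:ℝ) 1 := by
      intro i hi
      have h0 : (0:ℝ) ≤ i/M := by positivity
      have h1 : (i:ℝ)/M ≤ 1 := by
        rw [div_le_one hMR]
        exact_mod_cast hi
      obtain ⟨hu0, hu1⟩ := hu
      obtain ⟨hv0, hv1⟩ := hv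
      constructor
      · simp only [hw]
        nlinarith
      · simp only [hw]
        nlinarith
    have hstep : ∀ i, |w (i+1) - w i| ≤ δ := by
      intro i
      have : w (i+1) - w i = (u - v)/M := by
        simp only [hw]
        push_cast
        field_simp
        ring
      rw [this, abs_div, abs_of_pos hMR, div_le_iff₀ hMR]
      calc |u - v| ≤ M * δ := by
            have := Nat.le_ceil (|u - v|/δ)
            rw [div_le_iff₀ hδ] at this
            linarith [this]
        _ = δ * M := by ring
    have htel : g u - g v = ∑ i ∈ Finset.range M, (g (w (i+1)) - g (w i)) := by
      rw [Finset.sum_range_sub (fun i => g (w i))]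
      have hw0 : w 0 = v := by simp [hw]
      have hwM : w M = u := by
        simp only [hw]
        field_simp
        ring
      rw [hw0, hwM]
    calc |g u - g v| = |∑ i ∈ Finset.range M, (g (w (i+1)) - g (w i))| := by rw [htel]
      _ ≤ ∑ i ∈ Finset.range M, |g (w (i+1)) - g (w i)| := Finset.abs_sum_le_sum_abs _ _
      _ ≤ ∑ i ∈ Finset.range M, ω := by
          apply Finset.sum_le_sum
          intro i hi
          have hiM : i < M := Finset.mem_range.mp hi
          exact le_modulus g hg (hwmem (i+1) (by omega)) (hwmem i (by omega)) (hstep i)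
      _ = M * ω := by rw [Finset.sum_const, Finset.card_range, nsmul_eq_mul]
      _ ≤ (1 + |u - v|/δ) * ω := by
          apply mul_le_mul_of_nonneg_right _ hω0
          have h := Nat.ceil_lt_add_one (div_nonneg (abs_nonneg (u - v)) hδ.le)
          rw [← hM] at h
          linarith

lemma taylor_bound (f f' : ℝ → ℝ)
    (hf : ∀ t ∈ Set.Icc (0 : ℝ) 1, HasDerivAt f (f' t) t)
    (hf' : ContinuousOn f' (Set.Icc (0 : ℝ) 1))
    {δ : ℝ} (hδ : 0 < δ) {x t : ℝ} (hx : x ∈ Set.Icc (0:ℝ) 1) (ht : t ∈ Set.Icc (0:ℝ) 1) :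
    |f t - f x - f' x * (t - x)| ≤ (1 + |t - x|/δ) * modulus f' 0 1 δ * |t - x| := by
  have hω0 : 0 ≤ modulus f' 0 1 δ := modulus_nonneg f' hf' hδ.le
  rcases eq_or_ne t x with rfl | hne
  · simp
  -- MVT on the interval between x and t
  have key : ∃ ξ ∈ Set.Icc (0:ℝ) 1, |ξ - x| ≤ |t - x| ∧ f t - f x = f' ξ * (t - x) := by
    rcases lt_or_gt_of_ne hne with hlt | hgt
    · -- t < x
      have hsub : Set.Icc t x ⊆ Set.Icc (0:ℝ) 1 := Set.Icc_subset_Icc ht.1 hx.2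
      have hcont : ContinuousOn f (Set.Icc t x) := fun s hs =>
        ((hf s (hsub hs)).continuousAt).continuousWithinAt
      have hderiv : ∀ s ∈ Set.Ioo t x, HasDerivAt f (f' s) s := fun s hs =>
        hf s (hsub (Set.Ioo_subset_Icc_self hs))
      obtain ⟨ξ, hξ, hslope⟩ := exists_hasDerivAt_eq_slope f f' hlt hcont hderiv
      refine ⟨ξ, hsub (Set.Ioo_subset_Icc_self hξ), ?_, ?_⟩
      · rw [abs_sub_comm t x]
        rw [abs_of_nonpos (by linarith [hξ.2] : ξ - x ≤ 0), abs_of_nonneg (by linarith : x - t ≥ 0)]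
        linarith [hξ.1]
      · rw [eq_div_iff (by intro h; apply hne; linarith : x - t ≠ 0)] at hslope
        linear_combination hslope
    · -- x < t
      have hsub : Set.Icc x t ⊆ Set.Icc (0:ℝ) 1 := Set.Icc_subset_Icc hx.1 ht.2
      have hcont : ContinuousOn f (Set.Icc x t) := fun s hs =>
        ((hf s (hsub hs)).continuousAt).continuousWithinAt
      have hderiv : ∀ s ∈ Set.Ioo x t, HasDerivAt f (f' s) s := fun s hs =>
        hf s (hsub (Set.Ioo_subset_Icc_self hs))
      obtain ⟨ξ, hξ, hslope⟩ := exists_hasDerivAt_eq_slope f f' hgt hcont hderiv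
      refine ⟨ξ, hsub (Set.Ioo_subset_Icc_self hξ), ?_, ?_⟩
      · rw [abs_of_nonneg (by linarith [hξ.1] : (0:ℝ) ≤ ξ - x), abs_of_nonneg (by linarith : (0:ℝ) ≤ t - x)]
        linarith [hξ.2]
      · rw [eq_div_iff (by intro h; apply hne; linarith : t - x ≠ 0)] at hslope
        linear_combination -hslope
  obtain ⟨ξ, hξmem, hξle, hval⟩ := key
  have : f t - f x - f' x * (t - x) = (f' ξ - f' x) * (t - x) := by rw [hval]; ring
  rw [this, abs_mul]
  apply mul_le_mul_of_nonneg_right _ (abs_nonneg _)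
  calc |f' ξ - f' x| ≤ (1 + |ξ - x|/δ) * modulus f' 0 1 δ := modulus_chain f' hf' hδ hξmem hx
    _ ≤ (1 + |t - x|/δ) * modulus f' 0 1 δ := by
        apply mul_le_mul_of_nonneg_right _ hω0
        gcongr

lemma rfac_nonneg (x h : ℝ) (m : ℕ) (H : ∀ i : ℕ, i < m → 0 ≤ x + i*h) : 0 ≤ rfac x h m :=
  Finset.prod_nonneg fun i hi => H i (Finset.mem_range.mp hi)

lemma rfac_pos (x h : ℝ) (m : ℕ) (H : ∀ i : ℕ, i < m → 0 < x + i*h) : 0 < rfac x h m :=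
  Finset.prod_pos fun i hi => H i (Finset.mem_range.mp hi)

lemma rfacD1 (c : ℝ) (m : ℕ) : rfac 1 c (m+2) = rfac (1+c) c (m+1) := by
  have h : rfac 1 c (m+1+1) = 1 * rfac (1+c) c (m+1) := rfac_succ' 1 c (m+1)
  rw [one_mul] at h
  exact h

lemma rfacD2 (c : ℝ) (m : ℕ) : rfac (1+c) c (m+1) = (1+c) * rfac (1+2*c) c m := by
  have h := rfac_succ' (1+c) c m
  rw [h, show 1+c+c = 1+2*c from by ring]


theorem Rop_deriv_estimate_uniform (f f' : ℝ → ℝ)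
    (hf : ∀ t ∈ Set.Icc (0 : ℝ) 1, HasDerivAt f (f' t) t)
    (hf' : ContinuousOn f' (Set.Icc (0 : ℝ) 1))
    (n : ℕ) (hn : 1 < n) (x : ℝ) (hx : x ∈ Set.Icc (0 : ℝ) 1) :
    |Rop n f x - f x| ≤
      ((4 + 6 * Real.sqrt 3) / 27) * (n : ℝ) ^ (-(1 : ℝ) / 2) *
        modulus f' 0 1 ((n : ℝ) ^ (-(1 : ℝ) / 2)) := by
  obtain ⟨N, rfl⟩ : ∃ N, n = N + 2 := ⟨n - 2, by omega⟩
  obtain ⟨hx0, hx1⟩ := hx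
  have h1x0 : (0:ℝ) ≤ 1 - x := by linarith
  simp only [Rop]
  set nn : ℝ := ((N + 2 : ℕ) : ℝ) with hnn
  have hnn2 : nn = (N:ℝ) + 2 := by rw [hnn]; push_cast; ring
  have hNnn : (0:ℝ) ≤ (N:ℝ) := Nat.cast_nonneg N
  have hnnpos : (0:ℝ) < nn := by rw [hnn2]; linarith
  have hnn2le : (2:ℝ) ≤ nn := by rw [hnn2]; linarith
  have hd : (0:ℝ) < nn - 1 := by linarith
  have hd1 : (1:ℝ) ≤ nn - 1 := by linarith
  set μ := min x (1 - x) with hμ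
  have hμ0 : 0 ≤ μ := le_min hx0 h1x0
  have hμx : μ ≤ x := min_le_left _ _
  have hμ1x : μ ≤ 1 - x := min_le_right _ _
  have hμhalf : μ ≤ 1/2 := by
    rcases le_total x (1-x) with h | h
    · rw [hμ, min_eq_left h]; linarith
    · rw [hμ, min_eq_right h]; linarith
  set c : ℝ := -μ / (nn - 1) with hc
  set P : ℕ → ℝ := polyaProb x (1 - x) c (N + 2) with hPdef
  set δ : ℝ := nn ^ (-(1 : ℝ) / 2) with hδdef
  set ω : ℝ := modulus f' 0 1 δ with hωdef
  have hμdiv : μ / (nn - 1) ≤ μ := by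
    rw [div_le_iff₀ hd]
    nlinarith
  have h1c : (0:ℝ) < 1 + c := by
    rw [hc]
    have : μ / (nn-1) ≤ 1/2 := le_trans hμdiv hμhalf
    have e : -μ/(nn-1) = -(μ/(nn-1)) := by ring
    rw [e]; linarith
  -- factor positivity
  have hfacx : ∀ i : ℕ, i < N + 2 → 0 ≤ x + i*c := by
    intro i hi
    have hi' : (i:ℝ) ≤ nn - 1 := by
      rw [hnn2]
      have : (i:ℝ) ≤ (N:ℝ) + 1 := by exact_mod_cast Nat.lt_succ_iff.mp (by omega : i < (N+1)+1)
      linarith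
    have e : (i:ℝ)*c = -((i:ℝ)*μ)/(nn-1) := by rw [hc]; ring
    have h2 : (i:ℝ)*μ ≤ (nn-1)*μ := mul_le_mul_of_nonneg_right hi' hμ0
    have h3 : ((i:ℝ)*μ)/(nn-1) ≤ μ := by
      rw [div_le_iff₀ hd]; nlinarith
    rw [e]
    have : -((i:ℝ)*μ)/(nn-1) = -(((i:ℝ)*μ)/(nn-1)) := by ring
    rw [this]; linarith
  have hfac1x : ∀ i : ℕ, i < N + 2 → 0 ≤ (1-x) + i*c := by
    intro i hi
    have hi' : (i:ℝ) ≤ nn - 1 := by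
      rw [hnn2]
      have : (i:ℝ) ≤ (N:ℝ) + 1 := by exact_mod_cast Nat.lt_succ_iff.mp (by omega : i < (N+1)+1)
      linarith
    have e : (i:ℝ)*c = -((i:ℝ)*μ)/(nn-1) := by rw [hc]; ring
    have h2 : (i:ℝ)*μ ≤ (nn-1)*μ := mul_le_mul_of_nonneg_right hi' hμ0
    have h3 : ((i:ℝ)*μ)/(nn-1) ≤ μ := by rw [div_le_iff₀ hd]; nlinarith
    rw [e]
    have : -((i:ℝ)*μ)/(nn-1) = -(((i:ℝ)*μ)/(nn-1)) := by ring
    rw [this]; linarith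
  have hfacone : ∀ i : ℕ, i < N + 2 → 0 < 1 + i*c := by
    intro i hi
    have hi' : (i:ℝ) ≤ nn - 1 := by
      rw [hnn2]
      have : (i:ℝ) ≤ (N:ℝ) + 1 := by exact_mod_cast Nat.lt_succ_iff.mp (by omega : i < (N+1)+1)
      linarith
    have e : (i:ℝ)*c = -((i:ℝ)*μ)/(nn-1) := by rw [hc]; ring
    have h2 : (i:ℝ)*μ ≤ (nn-1)*μ := mul_le_mul_of_nonneg_right hi' hμ0
    have h3 : ((i:ℝ)*μ)/(nn-1) ≤ μ := by rw [div_le_iff₀ hd]; nlinarith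
    rw [e]
    have e2 : -((i:ℝ)*μ)/(nn-1) = -(((i:ℝ)*μ)/(nn-1)) := by ring
    rw [e2]
    have : μ < 1 := by linarith
    linarith
  have hfacone2 : ∀ i : ℕ, i < N → 0 < 1 + 2*c + i*c := by
    intro i hi
    have := hfacone (i+2) (by omega)
    have e : 1 + ((i+2 : ℕ):ℝ)*c = 1 + 2*c + (i:ℝ)*c := by push_cast; ring
    rw [e] at this
    exact this
  have hDpos : 0 < rfac 1 c (N+2) := rfac_pos 1 c (N+2) (fun i hi => by
    have := hfacone i hi
    simpa using this)
  have hone : x + (1-x) = (1:ℝ) := by ring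
  have hPk : ∀ k : ℕ, P k = ((N+2).choose k : ℝ) * rfac x c k * rfac (1-x) c (N+2-k) / rfac 1 c (N+2) := by
    intro k
    rw [hPdef]
    simp only [polyaProb, hone]
  have hPnonneg : ∀ k ∈ Finset.range (N+2+1), 0 ≤ P k := by
    intro k hk
    have hk' : k ≤ N+2 := Nat.lt_succ_iff.mp (Finset.mem_range.mp hk)
    rw [hPk k]
    apply div_nonneg _ hDpos.le
    apply mul_nonneg (mul_nonneg (Nat.cast_nonneg _) _)
    · exact rfac_nonneg _ _ _ (fun i hi => hfac1x i (by omega))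
    · exact rfac_nonneg _ _ _ (fun i hi => hfacx i (by omega))
  -- moment sums
  have hsum : ∑ k ∈ Finset.range (N+2+1), P k = 1 := by
    have e : ∑ k ∈ Finset.range (N+2+1), P k
        = (∑ k ∈ Finset.range (N+2+1), ((N+2).choose k : ℝ) * rfac x c k * rfac (1-x) c (N+2-k)) / rfac 1 c (N+2) := by
      rw [Finset.sum_div]
      exact Finset.sum_congr rfl (fun k _ => hPk k)
    have hv : ∑ k ∈ Finset.range (N+2+1), ((N+2).choose k : ℝ) * rfac x c k * rfac (1-x) c (N+2-k)
        = rfac (x+(1-x)) c (N+2) := vandermonde c x (1-x) (N+2)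
    rw [hone] at hv
    rw [e, hv, div_self hDpos.ne']
  have hA1 : ∑ k ∈ Finset.range (N+2+1), P k * (k:ℝ) = nn * x := by
    have e : ∑ k ∈ Finset.range (N+2+1), P k * (k:ℝ)
        = (∑ k ∈ Finset.range (N+2+1), (k:ℝ) * ((N+2).choose k : ℝ) * rfac x c k * rfac (1-x) c (N+2-k)) / rfac 1 c (N+2) := by
      rw [Finset.sum_div]
      apply Finset.sum_congr rfl
      intro k _
      rw [hPk k]
      ring
    have hm : ∑ k ∈ Finset.range (N+2+1), (k:ℝ) * ((N+2).choose k : ℝ) * rfac x c k * rfac (1-x) c (N+2-k)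
        = (((N+1:ℕ):ℝ)+1) * x * rfac (x+(1-x)+c) c (N+1) := moment1 c x (1-x) (N+1)
    rw [hone] at hm
    have hcast : (((N+1:ℕ):ℝ)+1) = nn := by rw [hnn2]; push_cast; ring
    rw [e, hm, hcast, rfacD1 c N]
    rw [mul_div_assoc, div_self (by rw [← rfacD1 c N]; exact hDpos.ne'), mul_one]
  have hA2 : ∑ k ∈ Finset.range (N+2+1), P k * ((k:ℝ) * ((k:ℝ)-1)) = nn*(nn-1)*x*(x+c)/(1+c) := by
    have e : ∑ k ∈ Finset.range (N+2+1), P k * ((k:ℝ) * ((k:ℝ)-1))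
        = (∑ k ∈ Finset.range (N+2+1), (k:ℝ) * ((k:ℝ)-1) * ((N+2).choose k : ℝ) * rfac x c k * rfac (1-x) c (N+2-k)) / rfac 1 c (N+2) := by
      rw [Finset.sum_div]
      apply Finset.sum_congr rfl
      intro k _
      rw [hPk k]
      ring
    have hm : ∑ k ∈ Finset.range (N+2+1), (k:ℝ) * ((k:ℝ)-1) * ((N+2).choose k : ℝ) * rfac x c k * rfac (1-x) c (N+2-k)
        = ((N:ℝ)+2) * ((N:ℝ)+1) * x * (x+c) * rfac (x+(1-x)+2*c) c N := moment2 c x (1-x) N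
    have h12 : x+(1-x)+2*c = 1+2*c := by ring
    rw [h12] at hm
    have hR2pos : 0 < rfac (1+2*c) c N := rfac_pos _ _ _ (fun i hi => by
      have := hfacone2 i hi
      linarith [this])
    have hDfact : rfac 1 c (N+2) = (1+c) * rfac (1+2*c) c N := by
      rw [rfacD1 c N, rfacD2 c N]
    rw [e, hm, hDfact]
    rw [show ((N:ℝ)+2) * ((N:ℝ)+1) * x * (x+c) * rfac (1+2*c) c N / ((1+c) * rfac (1+2*c) c N)
        = (((N:ℝ)+2) * ((N:ℝ)+1) * x * (x+c)) / (1+c) from by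
      rw [mul_div_mul_right _ _ hR2pos.ne']]
    rw [hnn2]
    ring
  -- variance
  set V : ℝ := x*(1-x)*(1+nn*c)/(nn*(1+c)) with hVdef
  have hvar : ∑ k ∈ Finset.range (N+2+1), P k * ((k:ℝ)/nn - x)^2 = V := by
    have e : ∀ k ∈ Finset.range (N+2+1), P k * ((k:ℝ)/nn - x)^2
        = (P k * ((k:ℝ)*((k:ℝ)-1)) + (1-2*x*nn)*(P k * (k:ℝ)) + (x^2*nn^2)*P k)/nn^2 := by
      intro k _
      field_simp
      ring
    rw [Finset.sum_congr rfl e, ← Finset.sum_div, Finset.sum_add_distrib, Finset.sum_add_distrib,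
      ← Finset.mul_sum, ← Finset.mul_sum, hsum, hA1, hA2, hVdef]
    field_simp
    ring
  have hV0 : 0 ≤ V := by
    rw [← hvar]
    apply Finset.sum_nonneg
    intro k hk
    exact mul_nonneg (hPnonneg k hk) (sq_nonneg _)
  -- key bound : nn * V ≤ 4/27
  have hkey : x*(1-x)*(1+nn*c) ≤ 4/27*(1+c) := by
    rcases le_total x (1-x) with hcase | hcase
    · have hμeq : μ = x := by rw [hμ, min_eq_left hcase]
      have hcd : c*(nn-1) = -x := by
        rw [hc, hμeq]
        field_simp
      have hx12 : x ≤ 1/2 := by linarith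
      have poly : x*(1-x)*((nn-1) - nn*x) ≤ 4/27*((nn-1) - x) := by
        have g1 : x*(1-x)*((nn-1)-nn*x) ≤ x*(1-x)*((1-x)*((nn-1)-x)) := by
          nlinarith [mul_nonneg (mul_nonneg hx0 h1x0) (sq_nonneg x)]
        have g2 : x*(1-x)^2 ≤ 4/27 := by
          nlinarith [mul_nonneg (sq_nonneg (3*x-1)) (by linarith : (0:ℝ) ≤ 4 - 3*x)]
        have g3 : (0:ℝ) ≤ (nn-1) - x := by linarith
        nlinarith [mul_nonneg (by linarith : (0:ℝ) ≤ 4/27 - x*(1-x)^2) g3]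
      apply le_of_mul_le_mul_right _ hd
      have eL : x*(1-x)*(1+nn*c)*(nn-1) = x*(1-x)*((nn-1)-nn*x) := by
        linear_combination (x*(1-x)*nn) * hcd
      have eR : 4/27*(1+c)*(nn-1) = 4/27*((nn-1)-x) := by
        linear_combination (4/27) * hcd
      rw [eL, eR]
      exact poly
    · have hμeq : μ = 1-x := by rw [hμ, min_eq_right hcase]
      have hcd : c*(nn-1) = -(1-x) := by
        rw [hc, hμeq]
        field_simp
      have poly : x*(1-x)*((nn-1) - nn*(1-x)) ≤ 4/27*((nn-1) - (1-x)) := by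
        have g1 : x*(1-x)*((nn-1)-nn*(1-x)) ≤ x*(1-x)*(x*((nn-1)-(1-x))) := by
          nlinarith [mul_nonneg (mul_nonneg hx0 h1x0) (sq_nonneg (1-x))]
        have g2 : x^2*(1-x) ≤ 4/27 := by
          nlinarith [mul_nonneg (sq_nonneg (3*x-2)) (by linarith : (0:ℝ) ≤ 3*x+1)]
        have g3 : (0:ℝ) ≤ (nn-1) - (1-x) := by linarith
        nlinarith [mul_nonneg (by linarith : (0:ℝ) ≤ 4/27 - x^2*(1-x)) g3]
      apply le_of_mul_le_mul_right _ hd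
      have eL : x*(1-x)*(1+nn*c)*(nn-1) = x*(1-x)*((nn-1)-nn*(1-x)) := by
        linear_combination (x*(1-x)*nn) * hcd
      have eR : 4/27*(1+c)*(nn-1) = 4/27*((nn-1)-(1-x)) := by
        linear_combination (4/27) * hcd
      rw [eL, eR]
      exact poly
  have hsle : nn * V ≤ 4/27 := by
    have e : nn * V = x*(1-x)*(1+nn*c)/(1+c) := by
      rw [hVdef]
      field_simp
    rw [e, div_le_iff₀ h1c]
    calc x*(1-x)*(1+nn*c) ≤ 4/27*(1+c) := hkey
      _ = 4/27*(1+c) := rfl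
  -- delta facts
  have hδpos : (0:ℝ) < δ := Real.rpow_pos_of_pos hnnpos _
  have hδ2 : δ^2 = nn⁻¹ := by
    rw [hδdef, ← Real.rpow_natCast (nn ^ (-(1:ℝ)/2)) 2, ← Real.rpow_mul hnnpos.le]
    rw [show (-(1:ℝ)/2) * ((2:ℕ):ℝ) = -1 from by push_cast; ring, Real.rpow_neg_one]
  have hω0 : 0 ≤ ω := modulus_nonneg f' hf' hδpos.le
  -- membership of nodes
  have htk : ∀ k ∈ Finset.range (N+2+1), ((k:ℝ)/nn) ∈ Set.Icc (0:ℝ) 1 := by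
    intro k hk
    have hk' : k ≤ N+2 := Nat.lt_succ_iff.mp (Finset.mem_range.mp hk)
    constructor
    · positivity
    · rw [div_le_one hnnpos, hnn]
      exact_mod_cast hk'
  -- decomposition
  have hA1' : ∑ k ∈ Finset.range (N+2+1), P k * ((k:ℝ)/nn) = x := by
    have e : ∀ k ∈ Finset.range (N+2+1), P k * ((k:ℝ)/nn) = (P k * (k:ℝ))/nn := by
      intro k _; ring
    rw [Finset.sum_congr rfl e, ← Finset.sum_div, hA1]
    field_simp
  have hdecomp : (∑ k ∈ Finset.range (N+2+1), P k * f ((k:ℝ)/nn)) - f x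
      = ∑ k ∈ Finset.range (N+2+1), P k * (f ((k:ℝ)/nn) - f x - f' x * ((k:ℝ)/nn - x)) := by
    have e : ∀ k ∈ Finset.range (N+2+1), P k * (f ((k:ℝ)/nn) - f x - f' x * ((k:ℝ)/nn - x))
        = P k * f ((k:ℝ)/nn) - f x * P k - f' x * (P k * ((k:ℝ)/nn)) + (f' x * x) * P k := by
      intro k _; ring
    rw [Finset.sum_congr rfl e, Finset.sum_add_distrib, Finset.sum_sub_distrib, Finset.sum_sub_distrib,
      ← Finset.mul_sum, ← Finset.mul_sum, ← Finset.mul_sum, hsum, hA1']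
    ring
  -- Cauchy-Schwarz
  have hCS : ∑ k ∈ Finset.range (N+2+1), P k * |(k:ℝ)/nn - x| ≤ Real.sqrt V := by
    set A := ∑ k ∈ Finset.range (N+2+1), P k * |(k:ℝ)/nn - x| with hAdef
    have hA0 : 0 ≤ A := Finset.sum_nonneg (fun k hk => mul_nonneg (hPnonneg k hk) (abs_nonneg _))
    have hcs := Finset.sum_mul_sq_le_sq_mul_sq (Finset.range (N+2+1))
      (fun k => Real.sqrt (P k)) (fun k => Real.sqrt (P k) * |(k:ℝ)/nn - x|)
    have e1 : ∑ k ∈ Finset.range (N+2+1), Real.sqrt (P k) * (Real.sqrt (P k) * |(k:ℝ)/nn - x|) = A := by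
      rw [hAdef]
      apply Finset.sum_congr rfl
      intro k hk
      rw [← mul_assoc, Real.mul_self_sqrt (hPnonneg k hk)]
    have e2 : ∑ k ∈ Finset.range (N+2+1), (Real.sqrt (P k))^2 = 1 := by
      rw [← hsum]
      apply Finset.sum_congr rfl
      intro k hk
      rw [Real.sq_sqrt (hPnonneg k hk)]
    have e3 : ∑ k ∈ Finset.range (N+2+1), (Real.sqrt (P k) * |(k:ℝ)/nn - x|)^2 = V := by
      rw [← hvar]
      apply Finset.sum_congr rfl
      intro k hk
      rw [mul_pow, Real.sq_sqrt (hPnonneg k hk), sq_abs]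
    rw [e1, e2, e3, one_mul] at hcs
    calc A = Real.sqrt (A^2) := (Real.sqrt_sq hA0).symm
      _ ≤ Real.sqrt V := Real.sqrt_le_sqrt hcs
  -- final computation pieces
  have hVs : V = (nn*V) * δ^2 := by
    rw [hδ2]
    field_simp
  have hs0 : 0 ≤ nn*V := mul_nonneg hnnpos.le hV0
  have hsqrtV : Real.sqrt V ≤ Real.sqrt (nn*V) * δ := by
    have e : Real.sqrt V = Real.sqrt (nn*V) * δ := by
      conv_lhs => rw [hVs]
      rw [Real.sqrt_mul hs0, Real.sqrt_sq hδpos.le]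
    rw [e]
  have hsq427 : Real.sqrt (nn*V) ≤ 2*Real.sqrt 3/9 := by
    have h427 : Real.sqrt (4/27) = 2*Real.sqrt 3/9 := by
      rw [show (4/27:ℝ) = (2*Real.sqrt 3/9)^2 from by
        rw [div_pow, mul_pow, Real.sq_sqrt (by norm_num : (0:ℝ) ≤ 3)]
        norm_num]
      exact Real.sqrt_sq (by positivity)
    rw [← h427]
    exact Real.sqrt_le_sqrt hsle
  have hVoverδ : V/δ = (nn*V)*δ := by
    calc V/δ = ((nn*V)*δ^2)/δ := by conv_lhs => rw [hVs]
      _ = (nn*V)*δ := by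
          rw [pow_two]
          field_simp
  have hfinal : Real.sqrt V + V/δ ≤ (4 + 6*Real.sqrt 3)/27 * δ := by
    rw [hVoverδ]
    have hb : Real.sqrt (nn*V) + nn*V ≤ (4 + 6*Real.sqrt 3)/27 := by
      have : 2*Real.sqrt 3/9 = 6*Real.sqrt 3/27 := by ring
      linarith [hsq427, hsle]
    calc Real.sqrt V + (nn*V)*δ ≤ Real.sqrt (nn*V) * δ + (nn*V)*δ := by linarith
      _ = (Real.sqrt (nn*V) + nn*V)*δ := by ring
      _ ≤ (4 + 6*Real.sqrt 3)/27 * δ := mul_le_mul_of_nonneg_right hb hδpos.le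
  -- the main estimate
  calc |(∑ k ∈ Finset.range (N+2+1), P k * f ((k:ℝ)/nn)) - f x|
      = |∑ k ∈ Finset.range (N+2+1), P k * (f ((k:ℝ)/nn) - f x - f' x * ((k:ℝ)/nn - x))| := by
        rw [hdecomp]
    _ ≤ ∑ k ∈ Finset.range (N+2+1), |P k * (f ((k:ℝ)/nn) - f x - f' x * ((k:ℝ)/nn - x))| :=
        Finset.abs_sum_le_sum_abs _ _
    _ ≤ ∑ k ∈ Finset.range (N+2+1), P k * (ω * (|(k:ℝ)/nn - x| + ((k:ℝ)/nn - x)^2/δ)) := by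
        apply Finset.sum_le_sum
        intro k hk
        rw [abs_mul, abs_of_nonneg (hPnonneg k hk)]
        apply mul_le_mul_of_nonneg_left _ (hPnonneg k hk)
        have ht := taylor_bound f f' hf hf' hδpos ⟨hx0, hx1⟩ (htk k hk)
        have habs : |(k:ℝ)/nn - x| * |(k:ℝ)/nn - x| = ((k:ℝ)/nn - x)^2 := by
          rw [abs_mul_abs_self]; ring
        calc |f ((k:ℝ)/nn) - f x - f' x * ((k:ℝ)/nn - x)|
            ≤ (1 + |(k:ℝ)/nn - x|/δ) * ω * |(k:ℝ)/nn - x| := ht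
          _ = ω * (|(k:ℝ)/nn - x| + ((k:ℝ)/nn - x)^2/δ) := by
              rw [← habs]; ring
    _ = ω * ((∑ k ∈ Finset.range (N+2+1), P k * |(k:ℝ)/nn - x|)
          + (∑ k ∈ Finset.range (N+2+1), P k * ((k:ℝ)/nn - x)^2)/δ) := by
        have e : ∀ k ∈ Finset.range (N+2+1), P k * (ω * (|(k:ℝ)/nn - x| + ((k:ℝ)/nn - x)^2/δ))
            = ω * (P k * |(k:ℝ)/nn - x|) + (ω/δ) * (P k * ((k:ℝ)/nn - x)^2) := by
          intro k _; ring
        rw [Finset.sum_congr rfl e, Finset.sum_add_distrib, ← Finset.mul_sum, ← Finset.mul_sum]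
        ring
    _ ≤ ω * (Real.sqrt V + V/δ) := by
        apply mul_le_mul_of_nonneg_left _ hω0
        rw [hvar]
        have : V/δ ≤ V/δ := le_refl _
        linarith [hCS]
    _ ≤ ω * ((4 + 6*Real.sqrt 3)/27 * δ) := mul_le_mul_of_nonneg_left hfinal hω0
    _ = (4 + 6*Real.sqrt 3)/27 * δ * ω := by ring
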